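/- arXiv:2403.02190 — 2 statements merged into one kernel-verified Lean document; each statement's English description precedes it below -/
import Mathlib

section
/- Let L ∈ ℝ^{n×n} be symmetric positive definite, c ∈ ℝ^n, F ∈ ℝ^{m×n}, l ∈ ℝ^m, let S ∈ ℝ^{q×(n+m+1)}, and define the affine controller κ(x) = K(x − c) + l with K = F L⁻¹ and the stage cost 𝒥(x,u) = (xᵀ, uᵀ, 1) Q (xᵀ, uᵀ, 1)ᵀ where Q = SᵀS. Let M ∈ ℝ^{(n+m+1)×n} be the stacked matrix with blocks L, F, and the zero row (i.e., Mz = (Lz; Fz; 0)) and let v = (c; l; 1) ∈ ℝ^{n+m+1}. If there exist γ ≥ 0 and 𝒥̃ ∈ ℝ such that the block matrix [[γ·I_n, 0, (S M)ᵀ],[0, 𝒥̃ − γ, (S v)ᵀ],[S M, S v, I_q]] is positive semidefinite, then 𝒥̃ ≥ 𝒥(x, κ(x)) for every x in the ellipsoid E(c, L⁻²). -/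
open Matrix

noncomputable section

/-- Ellipsoid `E(c, P) = {x : (x−c)ᵀ P (x−c) ≤ 1}`. -/
def Ellip {n : ℕ} (c : Fin n → ℝ) (P : Matrix (Fin n) (Fin n) ℝ) : Set (Fin n → ℝ) :=
  {x | (x - c) ⬝ᵥ P.mulVec (x - c) ≤ 1}

/-- A vector as a single-row matrix. -/
def rowV {q : ℕ} (v : Fin q → ℝ) : Matrix (Fin 1) (Fin q) ℝ := Matrix.of fun _ j => v j

/-- A vector as a single-column matrix. -/
def colV {q : ℕ} (v : Fin q → ℝ) : Matrix (Fin q) (Fin 1) ℝ := Matrix.of fun i _ => v i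

/-- A scalar as a 1×1 matrix. -/
def sc (a : ℝ) : Matrix (Fin 1) (Fin 1) ℝ := Matrix.of fun _ _ => a

/-- 3×3 block matrix. -/
def block3 {n1 n2 n3 : Type*}
    (A11 : Matrix n1 n1 ℝ) (A12 : Matrix n1 n2 ℝ) (A13 : Matrix n1 n3 ℝ)
    (A21 : Matrix n2 n1 ℝ) (A22 : Matrix n2 n2 ℝ) (A23 : Matrix n2 n3 ℝ)
    (A31 : Matrix n3 n1 ℝ) (A32 : Matrix n3 n2 ℝ) (A33 : Matrix n3 n3 ℝ) :
    Matrix ((n1 ⊕ n2) ⊕ n3) ((n1 ⊕ n2) ⊕ n3) ℝ :=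
  fromBlocks (fromBlocks A11 A12 A21 A22) (fromRows A13 A23) (fromCols A31 A32) A33

lemma sc_mulVec (a : ℝ) (t : Fin 1 → ℝ) : (sc a).mulVec t = fun _ => a * t 0 := by
  funext i; simp [sc, Matrix.mulVec, dotProduct]

lemma rowV_mulVec {q : ℕ} (u : Fin q → ℝ) (t : Fin q → ℝ) :
    (rowV u).mulVec t = fun _ => u ⬝ᵥ t := by
  funext i; simp [rowV, Matrix.mulVec, dotProduct]

lemma colV_mulVec {q : ℕ} (u : Fin q → ℝ) (t : Fin 1 → ℝ) :
    (colV u).mulVec t = t 0 • u := by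
  funext i; simp [colV, Matrix.mulVec, dotProduct, mul_comm]

lemma one_dotProduct' (f : Fin 1 → ℝ) : (1 : Fin 1 → ℝ) ⬝ᵥ f = f 0 := by
  simp [dotProduct]

lemma sum_elim_add {α β : Type*} (f f' : α → ℝ) (g g' : β → ℝ) :
    Sum.elim f g + Sum.elim f' g' = Sum.elim (f + f') (g + g') := by
  funext i; cases i <;> simp

/-- **Cost-bound constraint of Corollary 1**: if the cost LMI
`[[γI, 0, (SM)ᵀ],[0, 𝒥̃ − γ, (Sv)ᵀ],[SM, Sv, I]] ⪰ 0` holds (with `M` the stacked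
matrix `(L; F; 0)` and `v = (c; l; 1)`), then `𝒥̃` upper-bounds the quadratic stage
cost `𝒥(x, κ(x))` of the affine controller `κ(x) = F L⁻¹ (x − c) + l` over `E(c, L⁻²)`. -/
theorem cost_bound {n m q : ℕ}
    (L : Matrix (Fin n) (Fin n) ℝ) (hL : L.PosDef)
    (c : Fin n → ℝ) (F : Matrix (Fin m) (Fin n) ℝ) (l : Fin m → ℝ)
    (S : Matrix (Fin q) ((Fin n ⊕ Fin m) ⊕ Fin 1) ℝ)
    (κ : (Fin n → ℝ) → (Fin m → ℝ))
    (hκ : ∀ x, κ x = (F * L⁻¹).mulVec (x - c) + l)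
    (Q : Matrix ((Fin n ⊕ Fin m) ⊕ Fin 1) ((Fin n ⊕ Fin m) ⊕ Fin 1) ℝ)
    (hQ : Q = Sᵀ * S)
    (J : (Fin n → ℝ) → (Fin m → ℝ) → ℝ)
    (hJ : ∀ x u, J x u =
      (Sum.elim (Sum.elim x u) 1) ⬝ᵥ Q.mulVec (Sum.elim (Sum.elim x u) 1))
    (M : Matrix ((Fin n ⊕ Fin m) ⊕ Fin 1) (Fin n) ℝ)
    (hM : M = fromRows (fromRows L F) 0)
    (v : (Fin n ⊕ Fin m) ⊕ Fin 1 → ℝ) (hv : v = Sum.elim (Sum.elim c l) 1)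
    (γ Jt : ℝ) (hγ : 0 ≤ γ)
    (hLMI : (block3 (γ • (1 : Matrix (Fin n) (Fin n) ℝ)) 0 (S * M)ᵀ
        0 (sc (Jt - γ)) (rowV (S.mulVec v))
        (S * M) (colV (S.mulVec v)) (1 : Matrix (Fin q) (Fin q) ℝ)).PosSemidef) :
    ∀ x ∈ Ellip c (L ^ 2)⁻¹, J x (κ x) ≤ Jt := by
  intro x hx
  have hLdet : IsUnit L.det := hL.det_pos.ne'.isUnit
  have hLsymm : Lᵀ = L := hL.isHermitian.eq
  have hLinv : L⁻¹ᵀ = L⁻¹ := by rw [Matrix.transpose_nonsing_inv, hLsymm]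
  set z : Fin n → ℝ := L⁻¹.mulVec (x - c) with hzdef
  have hz1 : z ⬝ᵥ z ≤ 1 := by
    have h2 : (L ^ 2)⁻¹ = L⁻¹ * L⁻¹ := by rw [pow_two, Matrix.mul_inv_rev]
    have hxe : (x - c) ⬝ᵥ ((L ^ 2)⁻¹).mulVec (x - c) = z ⬝ᵥ z := by
      rw [h2, ← Matrix.mulVec_mulVec, dotProduct_mulVec, ← Matrix.mulVec_transpose, hLinv]
    rw [← hxe]; exact hx
  set w : (Fin n ⊕ Fin m) ⊕ Fin 1 → ℝ := Sum.elim (Sum.elim x (κ x)) 1 with hwdef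
  have hMz : M.mulVec z + v = w := by
    have h1 : L.mulVec z = x - c := by
      rw [hzdef, Matrix.mulVec_mulVec, Matrix.mul_nonsing_inv L hLdet, Matrix.one_mulVec]
    have h2 : F.mulVec z = κ x - l := by
      rw [hzdef, Matrix.mulVec_mulVec, hκ]; abel
    funext i
    rcases i with (i | i) | i <;>
      simp [hM, hv, hwdef, fromRows_mulVec, h1, h2, Matrix.zero_mulVec]
  set y : Fin q → ℝ := S.mulVec w with hydef
  have hJy : J x (κ x) = y ⬝ᵥ y := by
    rw [hJ, hQ, ← Matrix.mulVec_mulVec, dotProduct_mulVec, Matrix.vecMul_transpose]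
  have hpsd := hLMI.dotProduct_mulVec_nonneg (Sum.elim (Sum.elim z 1) (-y))
  rw [star_trivial] at hpsd
  have hSMv : (S * M).mulVec z + S.mulVec v = y := by
    rw [hydef, ← hMz, Matrix.mulVec_add, ← Matrix.mulVec_mulVec]
  have key : Sum.elim (Sum.elim z 1) (-y) ⬝ᵥ
      ((block3 (γ • (1 : Matrix (Fin n) (Fin n) ℝ)) 0 (S * M)ᵀ
        0 (sc (Jt - γ)) (rowV (S.mulVec v))
        (S * M) (colV (S.mulVec v)) (1 : Matrix (Fin q) (Fin q) ℝ)).mulVec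
        (Sum.elim (Sum.elim z 1) (-y)))
      = γ * (z ⬝ᵥ z) + (Jt - γ) - y ⬝ᵥ y := by
    simp only [block3, fromBlocks_mulVec, Sum.elim_comp_inl, Sum.elim_comp_inr,
      fromRows_mulVec, fromCols_mulVec_sumElim, sumElim_dotProduct_sumElim,
      sc_mulVec, rowV_mulVec, colV_mulVec, Matrix.one_mulVec, Matrix.zero_mulVec,
      Matrix.smul_mulVec]
    simp only [Pi.one_apply, one_smul, mul_one, add_zero, zero_add]
    have ha : (S * M) *ᵥ z = y - S.mulVec v := eq_sub_of_add_eq hSMv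
    rw [ha, sum_elim_add, sumElim_dotProduct_sumElim, one_dotProduct']
    simp only [dotProduct_add, add_dotProduct, dotProduct_sub, sub_dotProduct,
      dotProduct_neg, neg_dotProduct, dotProduct_smul, smul_eq_mul,
      dotProduct_mulVec, Matrix.vecMul_transpose, Pi.add_apply]
    ring_nf
    rw [ha]
    simp only [dotProduct_add, add_dotProduct, dotProduct_sub, sub_dotProduct,
      dotProduct_neg, neg_dotProduct]
    ring
  have : 0 ≤ γ * (z ⬝ᵥ z) + (Jt - γ) - y ⬝ᵥ y := key ▸ hpsd
  nlinarith [mul_nonneg hγ (sub_nonneg.2 hz1), hJy]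
end
end

section
/- Under the hypotheses and notation of Theorem 2 of the paper (linearization-error bound for f around (c, ū, 0) with Lipschitz vector 𝐋, polytopic disturbance set 𝒲 = conv{w_1,…,w_{N_w}} with 0 ∈ 𝒲, input set 𝒰 = ∩_k {u : ‖U_k u‖ ≤ 1}), suppose L ≻ 0, F, l, δX, δU, φ, β_{ij}, τ_k, γ ≥ 0 and 𝒥̃ satisfy the LMIs (16)–(19) together with the cost LMI [[γ·I_n, 0, (S M)ᵀ],[0, 𝒥̃ − γ, (S v)ᵀ],[S M, S v, I_q]] ⪰ 0, where Q = SᵀS defines the stage cost 𝒥(x,u) = (xᵀ,uᵀ,1)Q(xᵀ,uᵀ,1)ᵀ, M is the stacked matrix (L; F; 0) and v = (c; l; 1). Then the affine controller κ(x) = F L⁻¹ (x − c) + l satisfies: (i) 𝒥̃ ≥ max_{x ∈ E(c, L⁻²)} 𝒥(x, κ(x)); (ii) κ(x) ∈ 𝒰 for all x ∈ E(c, L⁻²); and (iii) for all x ∈ E(c, L⁻²) and all w ∈ 𝒲, f(x, κ(x), w) ∈ E(c₊, P₊). -/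
open Matrix Set
open scoped Pointwise

noncomputable section

/-- Euclidean norm on `Fin k → ℝ`. -/
def eunorm {k : ℕ} (v : Fin k → ℝ) : ℝ := Real.sqrt (∑ i, v i ^ 2)

lemma block3_quadform {n1 n2 n3 : ℕ}
    (A11 : Matrix (Fin n1) (Fin n1) ℝ) (A12 : Matrix (Fin n1) (Fin n2) ℝ) (A13 : Matrix (Fin n1) (Fin n3) ℝ)
    (A21 : Matrix (Fin n2) (Fin n1) ℝ) (A22 : Matrix (Fin n2) (Fin n2) ℝ) (A23 : Matrix (Fin n2) (Fin n3) ℝ)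
    (A31 : Matrix (Fin n3) (Fin n1) ℝ) (A32 : Matrix (Fin n3) (Fin n2) ℝ) (A33 : Matrix (Fin n3) (Fin n3) ℝ)
    (z : Fin n1 → ℝ) (t : Fin n2 → ℝ) (y : Fin n3 → ℝ) :
    (Sum.elim (Sum.elim z t) y) ⬝ᵥ (block3 A11 A12 A13 A21 A22 A23 A31 A32 A33) *ᵥ (Sum.elim (Sum.elim z t) y)
    = z ⬝ᵥ (A11 *ᵥ z + A12 *ᵥ t + A13 *ᵥ y) + t ⬝ᵥ (A21 *ᵥ z + A22 *ᵥ t + A23 *ᵥ y)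
      + y ⬝ᵥ (A31 *ᵥ z + A32 *ᵥ t + A33 *ᵥ y) := by
  simp [block3, fromBlocks_mulVec, fromRows_mulVec, fromCols_mulVec_sumElim,
    sumElim_dotProduct_sumElim, dotProduct_add, add_assoc]
  ring

lemma key {n k : ℕ} {α θ : ℝ} (hα : 0 ≤ α) {C : Matrix (Fin k) (Fin n) ℝ} {d : Fin k → ℝ}
    {W : Matrix (Fin k) (Fin k) ℝ}
    (h : (block3 (α • (1 : Matrix (Fin n) (Fin n) ℝ)) 0 Cᵀ 0 (sc (θ - α)) (rowV d) C (colV d) W).PosSemidef)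
    {z : Fin n → ℝ} (hz : z ⬝ᵥ z ≤ 1) (y : Fin k → ℝ) :
    0 ≤ θ + y ⬝ᵥ W *ᵥ y + 2 * ((C *ᵥ z + d) ⬝ᵥ y) := by
  have h2 := h.dotProduct_mulVec_nonneg (Sum.elim (Sum.elim z (fun _ => 1)) y)
  rw [show star (Sum.elim (Sum.elim z (fun _ => (1:ℝ))) y) = Sum.elim (Sum.elim z (fun _ => 1)) y from rfl,
    block3_quadform] at h2
  have e1 : z ⬝ᵥ ((α • (1 : Matrix (Fin n) (Fin n) ℝ)) *ᵥ z + (0 : Matrix (Fin n) (Fin 1) ℝ) *ᵥ (fun _ => 1) + Cᵀ *ᵥ y)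
      = α * (z ⬝ᵥ z) + (C *ᵥ z) ⬝ᵥ y := by
    simp [dotProduct_add, smul_mulVec, dotProduct_smul, dotProduct_mulVec, vecMul_transpose,
      smul_eq_mul]
  have e2 : (fun _ : Fin 1 => (1:ℝ)) ⬝ᵥ ((0 : Matrix (Fin 1) (Fin n) ℝ) *ᵥ z + sc (θ - α) *ᵥ (fun _ => 1) + rowV d *ᵥ y)
      = (θ - α) + d ⬝ᵥ y := by
    simp [dotProduct_add, sc, rowV, mulVec, dotProduct]
  have e3 : y ⬝ᵥ (C *ᵥ z + colV d *ᵥ (fun _ => 1) + W *ᵥ y)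
      = (C *ᵥ z) ⬝ᵥ y + d ⬝ᵥ y + y ⬝ᵥ W *ᵥ y := by
    have hcol : colV d *ᵥ (fun _ : Fin 1 => (1:ℝ)) = d := by
      ext i; simp [colV, mulVec, dotProduct]
    rw [hcol]
    simp [dotProduct_add, dotProduct_comm y]
  rw [e1, e2, e3] at h2
  nlinarith [mul_nonneg hα (sub_nonneg.2 hz), add_dotProduct (C *ᵥ z) d y]

lemma dotProduct_self_nn {k : ℕ} (v : Fin k → ℝ) : 0 ≤ v ⬝ᵥ v :=
  Finset.sum_nonneg fun i _ => mul_self_nonneg _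

lemma key_norm {n k : ℕ} {α θ : ℝ} (hα : 0 ≤ α) {C : Matrix (Fin k) (Fin n) ℝ} {d : Fin k → ℝ}
    (h : (block3 (α • (1 : Matrix (Fin n) (Fin n) ℝ)) 0 Cᵀ 0 (sc (θ - α)) (rowV d) C (colV d)
      (1 : Matrix (Fin k) (Fin k) ℝ)).PosSemidef)
    {z : Fin n → ℝ} (hz : z ⬝ᵥ z ≤ 1) :
    (C *ᵥ z + d) ⬝ᵥ (C *ᵥ z + d) ≤ θ := by
  have := key hα h hz (-(C *ᵥ z + d))
  rw [one_mulVec] at this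
  set s := C *ᵥ z + d
  simp only [dotProduct_neg, neg_dotProduct, neg_neg] at this
  linarith

lemma key_ellip {n k : ℕ} {α θ : ℝ} (hα : 0 ≤ α) {C : Matrix (Fin k) (Fin n) ℝ} {d : Fin k → ℝ}
    {Pp : Matrix (Fin k) (Fin k) ℝ} (hPp : Pp.PosDef)
    (h : (block3 (α • (1 : Matrix (Fin n) (Fin n) ℝ)) 0 Cᵀ 0 (sc (θ - α)) (rowV d) C (colV d)
      Pp⁻¹).PosSemidef)
    {z : Fin n → ℝ} (hz : z ⬝ᵥ z ≤ 1) :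
    (C *ᵥ z + d) ⬝ᵥ Pp *ᵥ (C *ᵥ z + d) ≤ θ := by
  have hk := key hα h hz (-(Pp *ᵥ (C *ᵥ z + d)))
  set s := C *ᵥ z + d with hs
  have hinv : Pp⁻¹ *ᵥ (Pp *ᵥ s) = s := by
    rw [mulVec_mulVec, Matrix.nonsing_inv_mul _ hPp.det_pos.ne'.isUnit, one_mulVec]
  rw [mulVec_neg, dotProduct_neg, neg_dotProduct, neg_neg, hinv, dotProduct_neg,
    dotProduct_comm s (Pp *ᵥ s)] at hk
  nlinarith [dotProduct_comm s (Pp *ᵥ s)]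

lemma L16 {n : ℕ} {δX : ℝ} {L : Matrix (Fin n) (Fin n) ℝ} (hLs : Lᵀ = L)
    (h : (fromBlocks (1 : Matrix (Fin n) (Fin n) ℝ) L L
      (δX • (1 : Matrix (Fin n) (Fin n) ℝ))).PosSemidef)
    (z : Fin n → ℝ) :
    (L *ᵥ z) ⬝ᵥ (L *ᵥ z) ≤ δX * (z ⬝ᵥ z) := by
  have h2 := h.dotProduct_mulVec_nonneg (Sum.elim (-(L *ᵥ z)) z)
  rw [show star (Sum.elim (-(L *ᵥ z)) z) = Sum.elim (-(L *ᵥ z)) z from rfl,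
    fromBlocks_mulVec, sumElim_dotProduct_sumElim] at h2
  have e : z ⬝ᵥ (L *ᵥ -(L *ᵥ z)) = -((L *ᵥ z) ⬝ᵥ (L *ᵥ z)) := by
    rw [mulVec_neg, dotProduct_neg, dotProduct_mulVec,
      show z ᵥ* L = L *ᵥ z by rw [← hLs, vecMul_transpose, hLs]]
  simp only [Sum.elim_comp_inl, Sum.elim_comp_inr] at h2
  rw [one_mulVec, smul_mulVec, one_mulVec, dotProduct_add, dotProduct_add, e,
    dotProduct_smul, smul_eq_mul] at h2
  simp only [neg_dotProduct, dotProduct_neg, neg_neg] at h2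
  linarith

lemma combo_bound {X Y Z a b : ℝ} (ha : 0 ≤ a) (hb : 0 ≤ b) (hab : a + b = 1)
    (hZ : 2 * Z ≤ X + Y) : a * a * X + 2 * (a * b) * Z + b * b * Y ≤ a * X + b * Y := by
  have hb' : b = 1 - a := by linarith
  subst hb'
  nlinarith [mul_nonneg (mul_nonneg ha (by linarith : (0:ℝ) ≤ 1 - a)) (sub_nonneg.2 hZ)]

lemma dotsq_convexOn {k : ℕ} : ConvexOn ℝ (univ : Set (Fin k → ℝ)) (fun w => w ⬝ᵥ w) := by
  refine ⟨convex_univ, fun x _ y _ a b ha hb hab => ?_⟩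
  simp only [smul_eq_mul]
  have expand : (a • x + b • y) ⬝ᵥ (a • x + b • y)
      = a * a * (x ⬝ᵥ x) + 2 * (a * b) * (x ⬝ᵥ y) + b * b * (y ⬝ᵥ y) := by
    simp only [dotProduct_add, add_dotProduct, smul_dotProduct, dotProduct_smul, smul_eq_mul]
    rw [dotProduct_comm y x]; ring
  rw [expand]
  have hxy := dotProduct_self_nn (x - y)
  rw [sub_dotProduct, dotProduct_sub, dotProduct_sub, dotProduct_comm y x] at hxy
  have hZ : 2 * (x ⬝ᵥ y) ≤ x ⬝ᵥ x + y ⬝ᵥ y := by linarith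
  exact combo_bound ha hb hab hZ

lemma quad_symm {k : ℕ} {M : Matrix (Fin k) (Fin k) ℝ} (hM : Mᵀ = M) (x y : Fin k → ℝ) :
    x ⬝ᵥ M *ᵥ y = y ⬝ᵥ M *ᵥ x := by
  rw [dotProduct_mulVec, ← hM, vecMul_transpose, hM, dotProduct_comm]

lemma ellip_convex {k : ℕ} {Pp : Matrix (Fin k) (Fin k) ℝ} (hPp : Pp.PosSemidef) :
    Convex ℝ {s : Fin k → ℝ | s ⬝ᵥ Pp *ᵥ s ≤ 1} := by
  intro x hx y hy a b ha hb hab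
  simp only [Set.mem_setOf_eq] at hx hy ⊢
  have hsym : Ppᵀ = Pp := hPp.1
  have expand : (a • x + b • y) ⬝ᵥ Pp *ᵥ (a • x + b • y)
      = a * a * (x ⬝ᵥ Pp *ᵥ x) + 2 * (a * b) * (x ⬝ᵥ Pp *ᵥ y) + b * b * (y ⬝ᵥ Pp *ᵥ y) := by
    simp only [mulVec_add, mulVec_smul, dotProduct_add, add_dotProduct, smul_dotProduct,
      dotProduct_smul, smul_eq_mul]
    rw [quad_symm hsym y x]; ring
  rw [expand]
  have hxy := hPp.dotProduct_mulVec_nonneg (x - y)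
  rw [show star (x - y) = x - y from rfl, mulVec_sub, dotProduct_sub, sub_dotProduct,
    sub_dotProduct, quad_symm hsym y x] at hxy
  have hZ : 2 * (x ⬝ᵥ Pp *ᵥ y) ≤ x ⬝ᵥ Pp *ᵥ x + y ⬝ᵥ Pp *ᵥ y := by linarith
  nlinarith [combo_bound ha hb hab hZ, mul_le_mul_of_nonneg_left hx ha,
    mul_le_mul_of_nonneg_left hy hb]

lemma mem_box_hull {n : ℕ} (h : Fin n → ℝ) (hh : ∀ i, 0 ≤ h i) (e : Fin n → ℝ)
    (he : ∀ i, |e i| ≤ h i) :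
    e ∈ convexHull ℝ (Set.range fun σ : Fin n → Bool => fun i => (if σ i then 1 else -1) * h i) := by
  classical
  have h1 : e ∈ univ.pi (fun i => convexHull ℝ ({-h i, h i} : Set ℝ)) := by
    intro i _
    show e i ∈ convexHull ℝ ({-h i, h i} : Set ℝ)
    rw [convexHull_pair, segment_eq_Icc (by linarith [hh i])]
    exact ⟨neg_le_of_abs_le (he i), le_of_abs_le (he i)⟩
  rw [← convexHull_pi] at h1
  refine convexHull_mono ?_ h1
  intro v hv
  refine ⟨fun i => if v i = h i then true else false, ?_⟩
  funext i
  by_cases hc : v i = h i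
  · simp [hc]
  · have hv' : v i = -h i := by
      rcases hv i (Set.mem_univ i) with h' | h'
      · exact h'
      · exact absurd h' hc
    simp only [hc, if_false, Bool.false_eq_true]
    rw [hv']; ring

lemma eunorm_sq {k : ℕ} (v : Fin k → ℝ) : eunorm v ^ 2 = v ⬝ᵥ v := by
  rw [eunorm, Real.sq_sqrt (Finset.sum_nonneg fun i _ => sq_nonneg _)]
  simp [dotProduct, sq]

lemma eunorm_le_one {k : ℕ} {v : Fin k → ℝ} (h : v ⬝ᵥ v ≤ 1) : eunorm v ≤ 1 := by
  rw [eunorm, Real.sqrt_le_one]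
  rwa [show (∑ i, v i ^ 2) = v ⬝ᵥ v by simp [dotProduct, sq]]

lemma mulVec_dot {m n : Type*} [Fintype m] [Fintype n] (A : Matrix m n ℝ) (s : n → ℝ) (t : m → ℝ) :
    (A *ᵥ s) ⬝ᵥ t = s ⬝ᵥ (Aᵀ *ᵥ t) := by
  rw [dotProduct_mulVec, vecMul_transpose]

/-- **Corollary 1 (correctness of a feasible point of the local optimization problem)**:
under the linearization-error bound, if the LMIs (16)–(19) together with the cost LMI
hold, then the affine controller `κ(x) = F L⁻¹ (x − c) + l` satisfies (i) `𝒥̃` bounds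
the stage cost on `E(c, L⁻²)`, (ii) its inputs are admissible, and (iii) it maps
`E(c, L⁻²)` into `E(c₊, P₊)` for every disturbance in `conv{w₁,…,w_{N_w}}`. -/
theorem corollary_one {n m d q Nw Nu : ℕ}
    (f : (Fin n → ℝ) → (Fin m → ℝ) → (Fin d → ℝ) → (Fin n → ℝ))
    (p : Fin Nu → ℕ) (Umat : (k : Fin Nu) → Matrix (Fin (p k)) (Fin m) ℝ)
    (wv : Fin Nw → (Fin d → ℝ))
    (hW0 : (0 : Fin d → ℝ) ∈ convexHull ℝ (Set.range wv))
    (c cp : Fin n → ℝ)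
    (Pp : Matrix (Fin n) (Fin n) ℝ) (hPp : Pp.PosDef)
    (ubar : Fin m → ℝ) (hubar : ∀ k, eunorm ((Umat k).mulVec ubar) ≤ 1)
    (A : Matrix (Fin n) (Fin n) ℝ) (B : Matrix (Fin n) (Fin m) ℝ)
    (E : Matrix (Fin n) (Fin d) ℝ) (g : Fin n → ℝ)
    (Lv : Fin n → ℝ) (hLv : ∀ i, 0 ≤ Lv i)
    (hlin : ∀ x u w, ∀ i,
      |f x u w i - (A.mulVec x + B.mulVec u + E.mulVec w + g) i| ≤
        (1 / 2) * Lv i * (eunorm (x - c) ^ 2 + eunorm (u - ubar) ^ 2 + eunorm w ^ 2))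
    (L : Matrix (Fin n) (Fin n) ℝ) (hL : L.PosDef)
    (F : Matrix (Fin m) (Fin n) ℝ) (l : Fin m → ℝ)
    (δX δU δW : ℝ) (hδX : 0 ≤ δX) (hδU : 0 ≤ δU)
    (hδW : IsGreatest (Set.range fun j => eunorm (wv j) ^ 2) δW)
    (φ : ℝ) (hφ : 0 ≤ φ)
    (β : (Fin n → Bool) → Fin Nw → ℝ) (hβ : ∀ σ j, 0 ≤ β σ j)
    (τ : Fin Nu → ℝ) (hτ : ∀ k, 0 ≤ τ k)
    (μ : Fin n → ℝ) (hμ : μ = g + A.mulVec c + B.mulVec l - cp)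
    (r2 : ℝ) (hr2 : r2 = δX + δU + δW)
    (V : (Fin n → Bool) → (Fin n → ℝ))
    (hV : ∀ σ i, V σ i = (if σ i then 1 else -1) * ((1 / 2) * Lv i * r2))
    (h16 : (fromBlocks (1 : Matrix (Fin n) (Fin n) ℝ) L L
      (δX • (1 : Matrix (Fin n) (Fin n) ℝ))).PosSemidef)
    (h17 : (block3 (φ • (1 : Matrix (Fin n) (Fin n) ℝ)) 0 Fᵀ
        0 (sc (δU - φ)) (rowV (l - ubar))
        F (colV (l - ubar)) (1 : Matrix (Fin m) (Fin m) ℝ)).PosSemidef)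
    (h18 : ∀ (σ : Fin n → Bool) (j : Fin Nw),
      (block3 (β σ j • (1 : Matrix (Fin n) (Fin n) ℝ)) 0 (A * L + B * F)ᵀ
        0 (sc (1 - β σ j)) (rowV (μ + V σ + E.mulVec (wv j)))
        (A * L + B * F) (colV (μ + V σ + E.mulVec (wv j))) Pp⁻¹).PosSemidef)
    (h19 : ∀ k : Fin Nu,
      (block3 (τ k • (1 : Matrix (Fin n) (Fin n) ℝ)) 0 (Umat k * F)ᵀ
        0 (sc (1 - τ k)) (rowV ((Umat k).mulVec l))
        (Umat k * F) (colV ((Umat k).mulVec l))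
        (1 : Matrix (Fin (p k)) (Fin (p k)) ℝ)).PosSemidef)
    (S : Matrix (Fin q) ((Fin n ⊕ Fin m) ⊕ Fin 1) ℝ)
    (Q : Matrix ((Fin n ⊕ Fin m) ⊕ Fin 1) ((Fin n ⊕ Fin m) ⊕ Fin 1) ℝ)
    (hQ : Q = Sᵀ * S)
    (J : (Fin n → ℝ) → (Fin m → ℝ) → ℝ)
    (hJ : ∀ x u, J x u =
      (Sum.elim (Sum.elim x u) 1) ⬝ᵥ Q.mulVec (Sum.elim (Sum.elim x u) 1))
    (M : Matrix ((Fin n ⊕ Fin m) ⊕ Fin 1) (Fin n) ℝ)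
    (hM : M = fromRows (fromRows L F) 0)
    (vstack : (Fin n ⊕ Fin m) ⊕ Fin 1 → ℝ) (hvstack : vstack = Sum.elim (Sum.elim c l) 1)
    (γ Jt : ℝ) (hγ : 0 ≤ γ)
    (hcost : (block3 (γ • (1 : Matrix (Fin n) (Fin n) ℝ)) 0 (S * M)ᵀ
        0 (sc (Jt - γ)) (rowV (S.mulVec vstack))
        (S * M) (colV (S.mulVec vstack)) (1 : Matrix (Fin q) (Fin q) ℝ)).PosSemidef)
    (κ : (Fin n → ℝ) → (Fin m → ℝ))
    (hκ : ∀ x, κ x = (F * L⁻¹).mulVec (x - c) + l) :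
    ∀ x ∈ Ellip c (L ^ 2)⁻¹,
      J x (κ x) ≤ Jt ∧
        (∀ k, eunorm ((Umat k).mulVec (κ x)) ≤ 1) ∧
        (∀ w ∈ convexHull ℝ (Set.range wv), f x (κ x) w ∈ Ellip cp Pp) := by
  intro x hx
  have hLdet : IsUnit L.det := hL.det_pos.ne'.isUnit
  have hLsym : Lᵀ = L := by
    rw [← Matrix.conjTranspose_eq_transpose_of_trivial]; exact hL.1
  have hinvsym : (L⁻¹)ᵀ = L⁻¹ := by rw [Matrix.transpose_nonsing_inv, hLsym]
  set z : Fin n → ℝ := L⁻¹ *ᵥ (x - c) with hzdef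
  have hzx : L *ᵥ z = x - c := by
    rw [hzdef, mulVec_mulVec, Matrix.mul_nonsing_inv _ hLdet, one_mulVec]
  have hz : z ⬝ᵥ z ≤ 1 := by
    have hxe : (x - c) ⬝ᵥ (L ^ 2)⁻¹ *ᵥ (x - c) ≤ 1 := hx
    calc z ⬝ᵥ z = (L⁻¹ *ᵥ (x - c)) ⬝ᵥ z := rfl
      _ = (x - c) ⬝ᵥ ((L⁻¹)ᵀ *ᵥ z) := mulVec_dot _ _ _
      _ = (x - c) ⬝ᵥ (L ^ 2)⁻¹ *ᵥ (x - c) := by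
          rw [hinvsym, hzdef, mulVec_mulVec, show L⁻¹ * L⁻¹ = (L ^ 2)⁻¹ by
            rw [pow_two, Matrix.mul_inv_rev]]
      _ ≤ 1 := hxe
  have hκz : κ x = F *ᵥ z + l := by rw [hκ, ← mulVec_mulVec]
  -- part (i)
  have parti : J x (κ x) ≤ Jt := by
    have hc := key_norm hγ hcost hz
    have hstack : M *ᵥ z + vstack = Sum.elim (Sum.elim x (κ x)) 1 := by
      rw [hM, hvstack, fromRows_mulVec, fromRows_mulVec]
      funext i
      rcases i with (i | i) | i
      · show (L *ᵥ z) i + c i = x i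
        rw [hzx]; simp
      · show (F *ᵥ z) i + l i = κ x i
        rw [hκz]; simp
      · show ((0 : Matrix (Fin 1) (Fin n) ℝ) *ᵥ z) i + 1 = 1
        simp
    have hMv : (S * M) *ᵥ z + S *ᵥ vstack = S *ᵥ (Sum.elim (Sum.elim x (κ x)) 1) := by
      rw [← mulVec_mulVec, ← mulVec_add, hstack]
    rw [hMv] at hc
    rw [hJ, hQ, ← mulVec_mulVec, ← mulVec_dot]
    exact hc
  refine ⟨parti, fun k => ?_, fun w hw => ?_⟩
  -- part (ii)
  · have hc := key_norm (hτ k) (h19 k) hz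
    have : (Umat k * F) *ᵥ z + Umat k *ᵥ l = Umat k *ᵥ (κ x) := by
      simp only [hκz, mulVec_add, mulVec_mulVec, hzdef, Matrix.mul_assoc]
    rw [this] at hc
    exact eunorm_le_one hc
  -- part (iii)
  · have hδW0 : 0 ≤ δW := by
      obtain ⟨j, hj⟩ := hδW.1
      rw [← hj]; positivity
    have hr20 : 0 ≤ r2 := by rw [hr2]; linarith
    -- the three norm bounds
    have hbX : eunorm (x - c) ^ 2 ≤ δX := by
      rw [eunorm_sq, ← hzx]
      calc (L *ᵥ z) ⬝ᵥ (L *ᵥ z) ≤ δX * (z ⬝ᵥ z) := L16 hLsym h16 z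
        _ ≤ δX * 1 := by
            exact mul_le_mul_of_nonneg_left hz hδX
        _ = δX := mul_one _
    have hbU : eunorm (κ x - ubar) ^ 2 ≤ δU := by
      rw [eunorm_sq]
      have hc := key_norm hφ h17 hz
      have he : F *ᵥ z + (l - ubar) = κ x - ubar := by
        rw [hκz]; funext i; simp; ring
      rwa [he] at hc
    have hbW : eunorm w ^ 2 ≤ δW := by
      rw [eunorm_sq]
      obtain ⟨y, ⟨j, hj⟩, hy⟩ :=
        dotsq_convexOn.exists_ge_of_mem_convexHull (Set.subset_univ _) hw
      calc w ⬝ᵥ w ≤ y ⬝ᵥ y := hy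
        _ = eunorm (wv j) ^ 2 := by rw [← hj, eunorm_sq]
        _ ≤ δW := hδW.2 ⟨j, rfl⟩
    set u := κ x
    set e : Fin n → ℝ := f x u w - (A *ᵥ x + B *ᵥ u + E *ᵥ w + g) with hedef
    have he : ∀ i, |e i| ≤ (1 / 2) * Lv i * r2 := by
      intro i
      refine (hlin x u w i).trans ?_
      have : eunorm (x - c) ^ 2 + eunorm (u - ubar) ^ 2 + eunorm w ^ 2 ≤ r2 := by
        rw [hr2]; linarith
      exact mul_le_mul_of_nonneg_left this (mul_nonneg (by norm_num) (hLv i))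
    -- e is in the convex hull of the vertices
    have hVfun : V = fun σ : Fin n → Bool => fun i => (if σ i then 1 else -1) * ((1 / 2) * Lv i * r2) := by
      funext σ i; exact hV σ i
    have hbox : e ∈ convexHull ℝ (Set.range V) := by
      rw [hVfun]
      exact mem_box_hull _ (fun i => mul_nonneg (mul_nonneg (by norm_num) (hLv i)) hr20) e he
    have hEw : E *ᵥ w ∈ convexHull ℝ (Set.range fun j => E *ᵥ wv j) := by
      have himg := (Matrix.mulVecLin E).image_convexHull (Set.range wv)
      have : E *ᵥ w ∈ Matrix.mulVecLin E '' convexHull ℝ (Set.range wv) :=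
        ⟨w, hw, rfl⟩
      rw [himg, ← Set.range_comp] at this
      exact this
    set b : Fin n → ℝ := (A * L + B * F) *ᵥ z + μ with hbdef
    have hK : ∀ (σ : Fin n → Bool) (j : Fin Nw),
        (b + (V σ + E *ᵥ wv j)) ⬝ᵥ Pp *ᵥ (b + (V σ + E *ᵥ wv j)) ≤ 1 := by
      intro σ j
      have hc := key_ellip (hβ σ j) hPp (h18 σ j) hz
      have : (A * L + B * F) *ᵥ z + (μ + V σ + E *ᵥ wv j) = b + (V σ + E *ᵥ wv j) := by
        rw [hbdef]; funext i; simp; ring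
      rwa [this] at hc
    have hsum : e + E *ᵥ w ∈ convexHull ℝ (Set.range V + Set.range fun j => E *ᵥ wv j) := by
      rw [convexHull_add]
      exact Set.add_mem_add hbox hEw
    have hmem : b + (e + E *ᵥ w) ∈ {s : Fin n → ℝ | s ⬝ᵥ Pp *ᵥ s ≤ 1} := by
      have h1 : b + (e + E *ᵥ w) ∈ b +ᵥ convexHull ℝ (Set.range V + Set.range fun j => E *ᵥ wv j) :=
        Set.vadd_mem_vadd_set hsum
      rw [← convexHull_vadd] at h1
      refine convexHull_min ?_ (ellip_convex hPp.posSemidef) h1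
      rintro s ⟨t, ⟨v1, ⟨σ, rfl⟩, v2, ⟨j, rfl⟩, rfl⟩, rfl⟩
      exact hK σ j
    have hpoint : f x u w - cp = b + (e + E *ᵥ w) := by
      have hx2 : x = L *ᵥ z + c := by rw [hzx]; funext i; simp
      have hfe : f x u w = A *ᵥ x + B *ᵥ u + E *ᵥ w + g + e := by
        rw [hedef]; funext i; simp
      rw [hfe, hbdef, hμ, hx2, hκz]
      funext i
      simp [mulVec_add, add_mulVec, mulVec_mulVec]
      ring
    show (f x u w - cp) ⬝ᵥ Pp *ᵥ (f x u w - cp) ≤ 1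
    rw [hpoint]
    exact hmem
end
end
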